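/- arXiv:2403.00409 — 2 statements merged into one kernel-verified Lean document; each statement's English description precedes it below -/
import Mathlib

section
/- For ε ∈ (0,1/2) and h ∈ ℝ, β > 0, the rDPO gradient weight ζ̂ = ((1−ε)σ(−βh) + εσ(βh))/(1−2ε) satisfies ζ̂ > σ(−βh) > ζ̄ where ζ̄ = (1−ε)σ(−βh) − εσ(βh). That is, rDPO weights strictly exceed DPO weights, which strictly exceed cDPO weights. -/
noncomputable def sigmoid (z : ℝ) : ℝ := 1 / (1 + Real.exp (-z))

lemma sigmoid_pos (z : ℝ) : 0 < sigmoid z := by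
  unfold sigmoid
  positivity

theorem gradient_weights_strict_order (β h ε : ℝ) (hβ : 0 < β) (hε0 : 0 < ε) (hε1 : ε < 1/2) :
    ((1 - ε) * sigmoid (-(β * h)) + ε * sigmoid (β * h)) / (1 - 2 * ε) > sigmoid (-(β * h)) ∧
    sigmoid (-(β * h)) > (1 - ε) * sigmoid (-(β * h)) - ε * sigmoid (β * h) := by
  have hs := sigmoid_pos (-(β * h))
  have ht := sigmoid_pos (β * h)
  have hd : (0:ℝ) < 1 - 2 * ε := by linarith
  constructor
  · rw [gt_iff_lt, lt_div_iff₀ hd]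
    nlinarith
  · nlinarith
end

section
/- Under the Plackett–Luce K-wise noise model where the observed ranking π̃ equals the true ranking π with probability 1 − ε and equals each of the other N−1 rankings with probability ε/(N−1), the robust loss L̂_ε(π̃) = ((N−1−ε)·L(π̃) − ε·Σ_{π'≠π̃} L(π')) / ((1−ε)N − 1) is an unbiased estimator of L(π): E_{π̃}[L̂_ε(π̃)] = L(π), for any ε ∈ [0, (N−1)/N) and any function L on the set of N rankings. -/
theorem plackett_luce_robust_loss_unbiased {R : Type*} [Fintype R] [DecidableEq R]
    (L : R → ℝ) (π : R) (ε : ℝ)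
    (hcard : 2 ≤ Fintype.card R)
    (hε0 : 0 ≤ ε) (hε1 : ε < ((Fintype.card R : ℝ) - 1) / (Fintype.card R : ℝ)) :
    let N : ℝ := (Fintype.card R : ℝ)
    let Lhat : R → ℝ := fun τ =>
      ((N - 1 - ε) * L τ - ε * ∑ π' ∈ Finset.univ.erase τ, L π') / ((1 - ε) * N - 1)
    (1 - ε) * Lhat π + ∑ τ ∈ Finset.univ.erase π, (ε / (N - 1)) * Lhat τ = L π := by
  intro N Lhat
  have hN : (2:ℝ) ≤ N := by simp only [N]; exact_mod_cast hcard
  have hN0 : (0:ℝ) < N := by linarith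
  have hN1 : N - 1 ≠ 0 := by linarith
  have hεN : ε * N < N - 1 := (lt_div_iff₀ hN0).mp hε1
  have hD : (1 - ε) * N - 1 ≠ 0 := by nlinarith
  set S := ∑ x, L x with hS
  have hsum : ∀ τ : R, ∑ π' ∈ Finset.univ.erase τ, L π' = S - L τ := fun τ =>
    Finset.sum_erase_eq_sub (Finset.mem_univ τ)
  have h1 : ∀ τ : R, (ε / (N - 1)) * Lhat τ =
      (ε / ((1 - ε) * N - 1)) * L τ - ε * ε * S / ((N - 1) * ((1 - ε) * N - 1)) := by
    intro τ
    simp only [Lhat, hsum]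
    field_simp
    ring
  rw [Finset.sum_congr rfl (fun τ _ => h1 τ), Finset.sum_sub_distrib, ← Finset.mul_sum,
    hsum π, Finset.sum_const, Finset.card_erase_of_mem (Finset.mem_univ π),
    Finset.card_univ]
  have hc : ((Fintype.card R - 1 : ℕ) : ℝ) = N - 1 := by
    have : 1 ≤ Fintype.card R := by omega
    push_cast [this]
    rfl
  rw [nsmul_eq_mul, hc]
  simp only [Lhat, hsum]
  field_simp
  ring
end
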